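/- For 1 ≤ k ≤ n-1, p(n,k) < C(n,k) · ∏_{j=1}^{∞} 1/(1 - (k/n)^j). -/

import Mathlib

/-- The partition function: number of partitions of `n`, with `p 0 = 1`. -/
def partitionFn (n : ℕ) : ℕ := Fintype.card (Nat.Partition n)

/-- `P n k = ∑_{j=0}^k C(n-j, k-j) p(j)`. -/
def P (n k : ℕ) : ℕ :=
  ∑ j ∈ Finset.range (k + 1), Nat.choose (n - j) (k - j) * partitionFn j

open Finset

/-- Binomial bound in ℕ: `C(n-j, k-j) * n^j ≤ C(n,k) * k^j`. -/
lemma choose_sub_mul_pow_le {n k : ℕ} (hkn : k ≤ n) :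
    ∀ j ≤ k, Nat.choose (n - j) (k - j) * n ^ j ≤ Nat.choose n k * k ^ j := by
  intro j hj
  induction j with
  | zero => simp
  | succ j ih =>
    have hj' : j ≤ k := by omega
    have ihj := ih hj'
    have hjn : j + 1 ≤ n := le_trans hj hkn
    have hnj : 0 < n - j := by omega
    have key : (n - j) * (Nat.choose (n - (j+1)) (k - (j+1))) =
        Nat.choose (n - j) (k - j) * (k - j) := by
      have e1 : n - j = (n - (j+1)) + 1 := by omega
      have e2 : k - j = (k - (j+1)) + 1 := by omega
      rw [e1, e2, ← Nat.add_one_mul_choose_eq]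
    have hcross : (k - j) * n ≤ k * (n - j) := by
      obtain ⟨c, hc⟩ : ∃ c, k = j + c := ⟨k - j, by omega⟩
      obtain ⟨d, hd⟩ : ∃ d, n = k + d := ⟨n - k, by omega⟩
      have e3 : k - j = c := by omega
      have e4 : n - j = c + d := by omega
      rw [e3, e4, hc, hd]
      nlinarith
    refine Nat.le_of_mul_le_mul_left ?_ hnj
    calc (n - j) * (Nat.choose (n - (j+1)) (k - (j+1)) * n ^ (j+1))
        = ((n - j) * Nat.choose (n - (j+1)) (k - (j+1))) * n ^ (j+1) := by ring
      _ = (Nat.choose (n - j) (k - j) * (k - j)) * n ^ (j+1) := by rw [key]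
      _ = (Nat.choose (n - j) (k - j) * n ^ j) * ((k - j) * n) := by ring
      _ ≤ (Nat.choose n k * k ^ j) * (k * (n - j)) := Nat.mul_le_mul ihj hcross
      _ = (n - j) * (Nat.choose n k * k ^ (j+1)) := by ring

/-- Partial geometric sum bound. -/
lemma geom_partial_le {y : ℝ} (hy0 : 0 ≤ y) (hy1 : y < 1) (m : ℕ) :
    ∑ i ∈ range m, y ^ i ≤ (1 - y)⁻¹ := by
  have h : 0 < 1 - y := by linarith
  rw [inv_eq_one_div, le_div_iff₀ h]
  have gm := geom_sum_mul y m
  have := pow_nonneg hy0 m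
  nlinarith

/-- Key combinatorial lemma: `∑_{j<m} p(j) x^j ≤ ∏_{j<m} (1-x^{j+1})⁻¹`. -/
lemma sum_partition_le_prod (m : ℕ) {x : ℝ} (hx0 : 0 ≤ x) (hx1 : x < 1) :
    ∑ j ∈ range m, (partitionFn j : ℝ) * x ^ j ≤ ∏ j ∈ range m, (1 - x ^ (j+1))⁻¹ := by
  classical
  have hpos : ∀ j : ℕ, 0 < 1 - x ^ (j+1) := by
    intro j
    have h : x ^ (j+1) < 1 := pow_lt_one₀ hx0 hx1 (by omega)
    linarith
  -- RHS ≥ expanded finite product of geometric partial sums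
  set T : Finset (Fin m → ℕ) := Fintype.piFinset (fun _ => range m) with hT
  have step1 : ∑ g ∈ T, x ^ (∑ j : Fin m, ((j : ℕ) + 1) * g j)
      ≤ ∏ j ∈ range m, (1 - x ^ (j+1))⁻¹ := by
    rw [← Fin.prod_univ_eq_prod_range (fun j => (1 - x ^ (j+1))⁻¹) m]
    have expand : ∏ j : Fin m, (∑ i ∈ range m, (x ^ ((j : ℕ)+1)) ^ i)
        = ∑ g ∈ T, x ^ (∑ j : Fin m, ((j : ℕ) + 1) * g j) := by
      rw [Finset.prod_univ_sum]
      refine Finset.sum_congr rfl fun g _ => ?_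
      rw [← Finset.prod_pow_eq_pow_sum]
      refine Finset.prod_congr rfl fun j _ => ?_
      rw [← pow_mul]
    rw [← expand]
    refine Finset.prod_le_prod (fun j _ => ?_) (fun j _ => ?_)
    · exact Finset.sum_nonneg fun i _ => pow_nonneg (pow_nonneg hx0 _) _
    · exact geom_partial_le (pow_nonneg hx0 _) (pow_lt_one₀ hx0 hx1 (Nat.succ_ne_zero _)) m
  -- LHS as a sum over sigma type
  set A : Finset ((_ : ℕ) × Nat.Partition _) :=
    (range m).sigma (fun j => (Finset.univ : Finset (Nat.Partition j))) with hA
  have step2 : ∑ j ∈ range m, (partitionFn j : ℝ) * x ^ j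
      = ∑ a ∈ A, x ^ a.1 := by
    rw [hA, Finset.sum_sigma]
    refine Finset.sum_congr rfl fun j _ => ?_
    rw [show (∑ s : Nat.Partition j, x ^ (Sigma.mk j s).fst)
        = ∑ _s : Nat.Partition j, x ^ j from rfl,
      Finset.sum_const, partitionFn, Fintype.card, nsmul_eq_mul]
  rw [step2]
  -- the injection
  set Φ : ((_ : ℕ) × Nat.Partition _) → (Fin m → ℕ) :=
    fun a i => a.2.parts.count ((i : ℕ) + 1) with hΦ
  have hw : ∀ a ∈ A, (∑ j : Fin m, ((j : ℕ) + 1) * Φ a j) = a.1 := by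
    rintro ⟨j, p⟩ ha
    have hj : j < m := by
      simpa [hA] using (Finset.mem_sigma.mp ha).1
    simp only [hΦ]
    have hsub : p.parts.toFinset ⊆ (range m).image (· + 1) := by
      intro v hv
      rw [Multiset.mem_toFinset] at hv
      have hv1 : 0 < v := p.parts_pos hv
      have hvs : v ≤ j := by
        rw [← p.parts_sum]
        exact Multiset.single_le_sum (fun y _ => Nat.zero_le y) v hv
      exact Finset.mem_image.mpr ⟨v - 1, Finset.mem_range.mpr (by omega), by omega⟩
    have hps : p.parts.sum = ∑ v ∈ p.parts.toFinset, p.parts.count v * v := by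
      conv_lhs => rw [show p.parts = p.parts.map id from (Multiset.map_id _).symm]
      rw [Finset.sum_multiset_map_count]
      simp [smul_eq_mul]
    calc ∑ i : Fin m, ((i : ℕ) + 1) * p.parts.count ((i : ℕ) + 1)
        = ∑ i ∈ range m, (i + 1) * p.parts.count (i + 1) := by
          exact Fin.sum_univ_eq_sum_range (fun i => (i + 1) * p.parts.count (i + 1)) m
      _ = ∑ v ∈ (range m).image (· + 1), v * p.parts.count v := by
          rw [Finset.sum_image (by intro a _ b _ h; simp only at h; omega)]
      _ = ∑ v ∈ p.parts.toFinset, v * p.parts.count v := by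
          refine (Finset.sum_subset hsub fun v _ hv => ?_).symm
          rw [Multiset.count_eq_zero_of_notMem (by simpa [Multiset.mem_toFinset] using hv)]
          ring
      _ = p.parts.sum := by rw [hps]; exact Finset.sum_congr rfl fun v _ => mul_comm _ _
      _ = j := p.parts_sum
  have hmem : ∀ a ∈ A, Φ a ∈ T := by
    rintro ⟨j, p⟩ ha
    have hj : j < m := by simpa [hA] using (Finset.mem_sigma.mp ha).1
    rw [hT, Fintype.mem_piFinset]
    intro i
    rw [Finset.mem_range]
    have h1 : Multiset.count ((i : ℕ) + 1) p.parts ≤ Multiset.card p.parts :=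
      Multiset.count_le_card _ _
    have h2 : Multiset.card p.parts ≤ p.parts.sum := by
      have := Multiset.card_nsmul_le_sum (s := p.parts) (a := 1)
        (fun y hy => p.parts_pos hy)
      simpa using this
    have := p.parts_sum
    simp only [hΦ]
    omega
  have hinj : ∀ a ∈ A, ∀ b ∈ A, Φ a = Φ b → a = b := by
    rintro ⟨j, p⟩ ha ⟨j', p'⟩ hb h
    have h1 : (∑ i : Fin m, ((i : ℕ) + 1) * Φ ⟨j, p⟩ i) = j := hw ⟨j, p⟩ ha
    have h2 : (∑ i : Fin m, ((i : ℕ) + 1) * Φ ⟨j', p'⟩ i) = j' := hw ⟨j', p'⟩ hb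
    have hj : j = j' := by rw [← h1, ← h2, h]
    subst hj
    have hj' : j < m := by simpa [hA] using (Finset.mem_sigma.mp ha).1
    congr 1
    ext v
    rcases Nat.eq_zero_or_pos v with rfl | hv0
    · rw [Multiset.count_eq_zero_of_notMem (fun hc => lt_irrefl 0 (p.parts_pos hc)),
        Multiset.count_eq_zero_of_notMem (fun hc => lt_irrefl 0 (p'.parts_pos hc))]
    rcases lt_or_ge (v - 1) m with hvm | hvm
    · have := congrFun h ⟨v - 1, hvm⟩
      simp only [hΦ] at this
      have e : v - 1 + 1 = v := by omega
      rwa [e] at this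
    · have hbig : ∀ q : Nat.Partition j, Multiset.count v q.parts = 0 := by
        intro q
        refine Multiset.count_eq_zero_of_notMem fun hc => ?_
        have : v ≤ j := by
          rw [← q.parts_sum]
          exact Multiset.single_le_sum (fun y _ => Nat.zero_le y) v hc
        omega
      rw [hbig p, hbig p']
  calc ∑ a ∈ A, x ^ a.1
      = ∑ a ∈ A, x ^ (∑ j : Fin m, ((j : ℕ) + 1) * Φ a j) := by
        refine Finset.sum_congr rfl fun a ha => ?_
        rw [hw a ha]
    _ = ∑ g ∈ A.image Φ, x ^ (∑ j : Fin m, ((j : ℕ) + 1) * g j) := by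
        rw [Finset.sum_image hinj]
    _ ≤ ∑ g ∈ T, x ^ (∑ j : Fin m, ((j : ℕ) + 1) * g j) := by
        refine Finset.sum_le_sum_of_subset_of_nonneg ?_ (fun g _ _ => pow_nonneg hx0 _)
        intro g hg
        obtain ⟨a, ha, rfl⟩ := Finset.mem_image.mp hg
        exact hmem a ha
    _ ≤ ∏ j ∈ range m, (1 - x ^ (j+1))⁻¹ := step1

lemma prod_le_tprod_aux {x : ℝ} (hx0 : 0 ≤ x) (hx1 : x < 1) (s : Finset ℕ) :
    ∏ j ∈ s, (1 - x ^ (j+1))⁻¹ ≤ ∏' j : ℕ, (1 - x ^ (j+1))⁻¹ := by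
  have hpos : ∀ j : ℕ, 0 < 1 - x ^ (j+1) := by
    intro j
    have h : x ^ (j+1) < 1 := pow_lt_one₀ hx0 hx1 (by omega)
    linarith
  have hsum : Summable (fun j : ℕ => Real.log ((1 - x ^ (j+1))⁻¹)) := by
    have hgeo : Summable (fun j : ℕ => x ^ (j+1) * (1 - x)⁻¹) := by
      apply Summable.mul_right
      have h : Summable (fun j : ℕ => x ^ j) := summable_geometric_of_lt_one hx0 hx1
      exact (summable_nat_add_iff 1).mpr h
    refine Summable.of_nonneg_of_le ?_ ?_ hgeo
    · intro j
      apply Real.log_nonneg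
      rw [le_inv_comm₀ one_pos (hpos j)]
      simpa using (pow_nonneg hx0 (j+1))
    · intro j
      have h1 : 0 < 1 - x ^ (j+1) := hpos j
      have := Real.log_le_sub_one_of_pos (inv_pos.mpr h1)
      have e : (1 - x ^ (j+1))⁻¹ - 1 = x ^ (j+1) / (1 - x ^ (j+1)) := by
        field_simp
        ring
      rw [e] at this
      refine this.trans ?_
      rw [div_eq_mul_inv]
      refine mul_le_mul_of_nonneg_left ?_ (pow_nonneg hx0 _)
      refine inv_anti₀ (by linarith) ?_
      have : x ^ (j+1) ≤ x := by
        calc x ^ (j+1) ≤ x ^ 1 := pow_le_pow_of_le_one hx0 hx1.le (by omega)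
          _ = x := pow_one x
      linarith
  have hp : HasProd (fun j : ℕ => (1 - x ^ (j+1))⁻¹)
      (Real.exp (∑' j : ℕ, Real.log ((1 - x ^ (j+1))⁻¹))) := by
    have := hsum.hasSum.rexp
    refine HasProd.congr_fun this fun j => ?_
    simp only [Function.comp]
    exact (Real.exp_log (inv_pos.mpr (hpos j))).symm
  have hnn : ∀ j : ℕ, 0 ≤ Real.log ((1 - x ^ (j+1))⁻¹) := by
    intro j
    apply Real.log_nonneg
    rw [le_inv_comm₀ one_pos (hpos j)]
    simpa using (pow_nonneg hx0 (j+1))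
  rw [hp.tprod_eq]
  calc ∏ j ∈ s, (1 - x ^ (j+1))⁻¹
      = ∏ j ∈ s, Real.exp (Real.log ((1 - x ^ (j+1))⁻¹)) := by
        refine Finset.prod_congr rfl fun j _ => ?_
        exact (Real.exp_log (inv_pos.mpr (hpos j))).symm
    _ = Real.exp (∑ j ∈ s, Real.log ((1 - x ^ (j+1))⁻¹)) := by rw [Real.exp_sum]
    _ ≤ Real.exp (∑' j : ℕ, Real.log ((1 - x ^ (j+1))⁻¹)) := by
        apply Real.exp_le_exp.mpr
        exact Summable.sum_le_tsum s (fun j _ => hnn j) hsum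

theorem P_lt_choose_mul_tprod (n k : ℕ) (hk1 : 1 ≤ k) (hk2 : k ≤ n - 1) :
    (P n k : ℝ) <
      (Nat.choose n k : ℝ) * ∏' j : ℕ, (1 - ((k : ℝ) / n) ^ (j + 1))⁻¹ := by
  have hn2 : 2 ≤ n := by omega
  have hkn : k < n := by omega
  set x : ℝ := (k : ℝ) / n with hx
  have hnpos : (0 : ℝ) < n := by positivity
  have hx0 : 0 < x := by
    apply div_pos (by exact_mod_cast hk1) hnpos
  have hx1 : x < 1 := by
    rw [hx, div_lt_one hnpos]
    exact_mod_cast hkn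
  have hpos : ∀ j : ℕ, 0 < 1 - x ^ (j+1) := by
    intro j
    have h : x ^ (j+1) < 1 := pow_lt_one₀ hx0.le hx1 (by omega)
    linarith
  have hC : (0 : ℝ) < Nat.choose n k := by
    exact_mod_cast Nat.choose_pos hkn.le
  -- binomial bound
  have hbin : ∀ j ∈ range (k+1), (Nat.choose (n-j) (k-j) : ℝ) ≤ (Nat.choose n k : ℝ) * x ^ j := by
    intro j hj
    rw [Finset.mem_range] at hj
    have h := choose_sub_mul_pow_le hkn.le j (by omega)
    have hn : (0 : ℝ) < (n : ℝ) ^ j := by positivity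
    rw [hx, div_pow, mul_div_assoc', le_div_iff₀ hn]
    exact_mod_cast h
  have step1 : (P n k : ℝ) ≤ (Nat.choose n k : ℝ) * ∑ j ∈ range (k+1), (partitionFn j : ℝ) * x ^ j := by
    rw [P]
    push_cast
    rw [Finset.mul_sum]
    refine Finset.sum_le_sum fun j hj => ?_
    have := hbin j hj
    have hp : (0 : ℝ) ≤ partitionFn j := Nat.cast_nonneg _
    calc (Nat.choose (n-j) (k-j) : ℝ) * partitionFn j
        ≤ ((Nat.choose n k : ℝ) * x ^ j) * partitionFn j :=
          mul_le_mul_of_nonneg_right this hp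
      _ = (Nat.choose n k : ℝ) * ((partitionFn j : ℝ) * x ^ j) := by ring
  have step2 : ∑ j ∈ range (k+1), (partitionFn j : ℝ) * x ^ j
      ≤ ∏ j ∈ range (k+1), (1 - x ^ (j+1))⁻¹ :=
    sum_partition_le_prod (k+1) hx0.le hx1
  have step3 : ∏ j ∈ range (k+1), (1 - x ^ (j+1))⁻¹
      < ∏ j ∈ range (k+2), (1 - x ^ (j+1))⁻¹ := by
    conv_rhs => rw [Finset.prod_range_succ]
    have hQ : 0 < ∏ j ∈ range (k+1), (1 - x ^ (j+1))⁻¹ :=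
      Finset.prod_pos fun j _ => inv_pos.mpr (hpos j)
    have hr : 1 < (1 - x ^ (k+1+1))⁻¹ := by
      rw [lt_inv_comm₀ one_pos (hpos (k+1))]
      have : 0 < x ^ (k+1+1) := pow_pos hx0 _
      linarith
    nlinarith
  have step4 : ∏ j ∈ range (k+2), (1 - x ^ (j+1))⁻¹
      ≤ ∏' j : ℕ, (1 - x ^ (j+1))⁻¹ := by
    exact prod_le_tprod_aux hx0.le hx1 (range (k+2))
  calc (P n k : ℝ)
      ≤ (Nat.choose n k : ℝ) * ∑ j ∈ range (k+1), (partitionFn j : ℝ) * x ^ j := step1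
    _ ≤ (Nat.choose n k : ℝ) * ∏ j ∈ range (k+1), (1 - x ^ (j+1))⁻¹ :=
        mul_le_mul_of_nonneg_left step2 hC.le
    _ < (Nat.choose n k : ℝ) * ∏ j ∈ range (k+2), (1 - x ^ (j+1))⁻¹ :=
        (mul_lt_mul_iff_right₀ hC).mpr step3
    _ ≤ (Nat.choose n k : ℝ) * ∏' j : ℕ, (1 - x ^ (j+1))⁻¹ :=
        mul_le_mul_of_nonneg_left step4 hC.le
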